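/- Let p : I → (0,∞) with Σ_{i∈I} p(i) = 1, let n : I → ℕ be a table of counts with total N = Σ_{i∈I} n(i), and define the marginal counts n(i_E) = Σ_{j∈I : j_E = i_E} n(j). Then the multinomial likelihood kernel has the exponential-family form ∏_{i∈I} p(i)^{n(i)} = exp{ Σ_{∅≠E⊆V} Σ_{i_E∈I_E*} n(i_E) θ_E(i_E) − N · log(1 + Σ_{∅≠E⊆V} Σ_{i_E∈I_E*} exp(Σ_{∅≠F⊆E} θ_F(i_F))) }. -/

import Mathlib

open Finset

/-- The cell equal to `i` on `F` and to the baseline `b` off `F`. -/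
def cellOn {V : Type} [DecidableEq V] {I : V → Type} (b : ∀ γ, I γ)
    (F : Finset V) (i : ∀ γ, I γ) : ∀ γ, I γ :=
  fun γ => if γ ∈ F then i γ else b γ

/-- The support of a cell: the set of coordinates that are off baseline. -/
def cellSupport {V : Type} [Fintype V] [DecidableEq V] {I : V → Type}
    [∀ γ, DecidableEq (I γ)] (b : ∀ γ, I γ) (j : ∀ γ, I γ) : Finset V :=
  Finset.univ.filter (fun γ => j γ ≠ b γ)

/-- The log-linear interaction parameter `θ_E(i_E)` under baseline constraints. -/
noncomputable def theta {V : Type} [DecidableEq V] {I : V → Type} (b : ∀ γ, I γ)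
    (p : (∀ γ, I γ) → ℝ) (E : Finset V) (i : ∀ γ, I γ) : ℝ :=
  ∑ F ∈ E.powerset, (-1 : ℝ) ^ (E \ F).card * Real.log (p (cellOn b F i))

section Aux

variable {V : Type} [Fintype V] [DecidableEq V] {I : V → Type}
  [∀ γ, Fintype (I γ)] [∀ γ, DecidableEq (I γ)] (b : ∀ γ, I γ)

lemma cellOn_empty (i : ∀ γ, I γ) : cellOn b ∅ i = b := by
  funext γ; simp [cellOn]

lemma cellOn_cellOn {G E : Finset V} (h : G ⊆ E) (i : ∀ γ, I γ) :
    cellOn b G (cellOn b E i) = cellOn b G i := by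
  funext γ
  by_cases hγ : γ ∈ G
  · simp [cellOn, hγ, h hγ]
  · simp [cellOn, hγ]

lemma cellOn_support (i : ∀ γ, I γ) : cellOn b (cellSupport b i) i = i := by
  funext γ
  by_cases hγ : γ ∈ cellSupport b i
  · simp [cellOn, hγ]
  · simp only [cellSupport, mem_filter, mem_univ, true_and, not_not] at hγ
    simp [cellOn, hγ]

lemma cellSupport_eq_empty_iff (i : ∀ γ, I γ) : cellSupport b i = ∅ ↔ i = b := by
  simp only [cellSupport, filter_eq_empty_iff, mem_univ, true_implies, not_not]
  exact ⟨fun h => funext fun γ => @h γ, fun h γ => by rw [h]⟩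

lemma support_cellOn {E : Finset V} {g : ∀ γ, I γ} (h : E ⊆ cellSupport b g) :
    cellSupport b (cellOn b E g) = E := by
  ext γ
  simp only [cellSupport, mem_filter, mem_univ, true_and, cellOn]
  by_cases hγ : γ ∈ E
  · simp only [hγ, if_pos, iff_true]
    have := h hγ
    simpa [cellSupport, hγ] using this
  · simp [hγ]

/-- Inner inclusion-exclusion sum. -/
lemma inner_ie (E G : Finset V) (hG : G ⊆ E) :
    ∑ F ∈ E.powerset.filter (fun F => G ⊆ F), (-1 : ℝ) ^ (F \ G).card
      = if G = E then 1 else 0 := by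
  have key : ∑ F ∈ E.powerset.filter (fun F => G ⊆ F), (-1 : ℝ) ^ (F \ G).card
      = ∑ H ∈ (E \ G).powerset, (-1 : ℝ) ^ H.card := by
    refine Finset.sum_bij' (fun F _ => F \ G) (fun H _ => H ∪ G) ?_ ?_ ?_ ?_ ?_
    · intro F hF
      simp only [mem_filter, mem_powerset] at hF
      exact mem_powerset.2 (sdiff_subset_sdiff hF.1 le_rfl)
    · intro H hH
      simp only [mem_powerset] at hH
      simp only [mem_filter, mem_powerset]
      exact ⟨union_subset (hH.trans sdiff_subset) hG, subset_union_right⟩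
    · intro F hF
      simp only [mem_filter, mem_powerset] at hF
      exact sdiff_union_of_subset hF.2
    · intro H hH
      simp only [mem_powerset] at hH
      have hdisj : Disjoint H G := Disjoint.mono_left hH sdiff_disjoint
      exact union_sdiff_cancel_right hdisj
    · intro F hF; rfl
  rw [key]
  have : ((∑ H ∈ (E \ G).powerset, (-1 : ℤ) ^ H.card : ℤ) : ℝ)
      = ∑ H ∈ (E \ G).powerset, (-1 : ℝ) ^ H.card := by push_cast; rfl
  rw [← this, Finset.sum_powerset_neg_one_pow_card]
  by_cases h : G = E
  · simp [h]
  · have : E \ G ≠ ∅ := fun hc =>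
      h (subset_antisymm hG (Finset.sdiff_eq_empty_iff_subset.mp hc))
    simp [this, h]

/-- Möbius inversion over the powerset. -/
lemma mobius (f : Finset V → ℝ) (E : Finset V) :
    ∑ F ∈ E.powerset, ∑ G ∈ F.powerset, (-1 : ℝ) ^ (F \ G).card * f G = f E := by
  rw [Finset.sum_comm' (t' := E.powerset)
    (s' := fun G => E.powerset.filter (fun F => G ⊆ F)) (by
      intro F G
      simp only [mem_powerset, mem_filter, mem_powerset]
      constructor
      · rintro ⟨h1, h2⟩; exact ⟨⟨h1, h2⟩, h2.trans h1⟩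
      · rintro ⟨⟨h1, h2⟩, _⟩; exact ⟨h1, h2⟩)]
  have : ∀ G ∈ E.powerset,
      ∑ F ∈ E.powerset.filter (fun F => G ⊆ F), (-1 : ℝ) ^ (F \ G).card * f G
        = (if G = E then 1 else 0) * f G := by
    intro G hG
    rw [← Finset.sum_mul, inner_ie E G (mem_powerset.mp hG)]
  rw [Finset.sum_congr rfl this]
  simp [Finset.sum_ite_eq' E.powerset E (fun G => f G)]

lemma sum_theta_powerset (p : (∀ γ, I γ) → ℝ) (E : Finset V) (j : ∀ γ, I γ) :
    ∑ F ∈ E.powerset, theta b p F j = Real.log (p (cellOn b E j)) :=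
  mobius (fun G => Real.log (p (cellOn b G j))) E

lemma theta_cellOn (p : (∀ γ, I γ) → ℝ) {F E : Finset V} (h : F ⊆ E) (g : ∀ γ, I γ) :
    theta b p F (cellOn b E g) = theta b p F g := by
  unfold theta
  refine Finset.sum_congr rfl fun G hG => ?_
  rw [cellOn_cellOn b ((mem_powerset.mp hG).trans h)]

/-- Flatten the double sum over nonempty `E` and cells with support `E`. -/
lemma double_sum (f : (∀ γ, I γ) → ℝ) :
    ∑ E ∈ (Finset.univ : Finset V).powerset.filter (· ≠ ∅),
      ∑ j ∈ Finset.univ.filter (fun j : (∀ γ, I γ) => cellSupport b j = E), f j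
    = ∑ j ∈ Finset.univ.filter (fun j : (∀ γ, I γ) => j ≠ b), f j := by
  have hmaps : ∀ j ∈ Finset.univ.filter (fun j : (∀ γ, I γ) => j ≠ b),
      cellSupport b j ∈ (Finset.univ : Finset V).powerset.filter (· ≠ ∅) := by
    intro j hj
    simp only [mem_filter, mem_univ, true_and] at hj ⊢
    simp only [mem_powerset]
    refine ⟨Finset.subset_univ _, ?_⟩
    simpa [cellSupport_eq_empty_iff] using hj
  rw [← Finset.sum_fiberwise_of_maps_to hmaps f]
  refine Finset.sum_congr rfl fun E hE => ?_
  refine Finset.sum_congr ?_ (fun _ _ => rfl)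
  simp only [mem_filter, mem_powerset, mem_univ, true_and] at hE
  rw [Finset.filter_filter]
  refine Finset.filter_congr fun j _ => ?_
  constructor
  · intro h
    refine ⟨fun hc => hE.2 ?_, h⟩
    rw [← h, cellSupport_eq_empty_iff]
    exact hc
  · exact And.right

lemma sum_theta_ne_empty (p : (∀ γ, I γ) → ℝ) (E : Finset V) (j : ∀ γ, I γ) :
    ∑ F ∈ E.powerset.filter (· ≠ ∅), theta b p F j
      = Real.log (p (cellOn b E j)) - Real.log (p b) := by
  have hemp : (∅ : Finset V) ∈ E.powerset := mem_powerset.2 (empty_subset _)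
  have h1 := Finset.sum_erase_add E.powerset (fun F => theta b p F j) hemp
  have h2 : theta b p ∅ j = Real.log (p b) := by simp [theta, cellOn_empty]
  have h3 := sum_theta_powerset b p E j
  rw [filter_ne']
  simp only [h2] at h1
  linarith

lemma fiber_eq (E : Finset V) (g : ∀ γ, I γ) :
    Finset.univ.filter (fun j : (∀ γ, I γ) => cellSupport b j = E ∧ ∀ γ ∈ E, g γ = j γ)
      = if E ⊆ cellSupport b g then {cellOn b E g} else ∅ := by
  ext j
  simp only [mem_filter, mem_univ, true_and]
  split_ifs with h
  · simp only [mem_singleton]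
    constructor
    · rintro ⟨h1, h2⟩
      funext γ
      by_cases hγ : γ ∈ E
      · rw [← h2 γ hγ]; simp [cellOn, hγ]
      · have : j γ = b γ := by
          by_contra hc
          exact hγ (h1 ▸ (by simp [cellSupport, hc] : γ ∈ cellSupport b j))
        simp [cellOn, hγ, this]
    · rintro rfl
      exact ⟨support_cellOn b h, fun γ hγ => by simp [cellOn, hγ]⟩
  · simp only [notMem_empty, iff_false]
    rintro ⟨h1, h2⟩
    refine h fun γ hγ => ?_
    have hj : j γ ≠ b γ := by
      have : γ ∈ cellSupport b j := h1 ▸ hγ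
      simpa [cellSupport] using this
    simp only [cellSupport, mem_filter, mem_univ, true_and]
    rw [h2 γ hγ]
    exact hj

end Aux

/-- The multinomial likelihood kernel in natural exponential family form: the canonical
statistics are the marginal counts `n(i_E) = Σ_{j : j_E = i_E} n(j)` and the canonical
parameters are the log-linear interactions `θ_E(i_E)`.  A tuple `i_E ∈ I_E*` is
represented by the unique cell whose support is exactly `E`. -/
theorem multinomial_expFamily_form {V : Type} [Fintype V] [DecidableEq V]
    {I : V → Type} [∀ γ, Fintype (I γ)] [∀ γ, DecidableEq (I γ)]
    (b : ∀ γ, I γ) (p : (∀ γ, I γ) → ℝ) (hp : ∀ i, 0 < p i)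
    (hsum : ∑ i : (∀ γ, I γ), p i = 1) (n : (∀ γ, I γ) → ℕ) :
    ∏ i : (∀ γ, I γ), p i ^ n i =
      Real.exp (
        (∑ E ∈ (Finset.univ : Finset V).powerset.filter (· ≠ ∅),
          ∑ j ∈ Finset.univ.filter (fun j : (∀ γ, I γ) => cellSupport b j = E),
            ((∑ g ∈ Finset.univ.filter (fun g : (∀ γ, I γ) => ∀ γ ∈ E, g γ = j γ), n g : ℕ) : ℝ)
              * theta b p E j)
        - ((∑ i : (∀ γ, I γ), n i : ℕ) : ℝ) *
            Real.log (1 + ∑ E ∈ (Finset.univ : Finset V).powerset.filter (· ≠ ∅),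
              ∑ j ∈ Finset.univ.filter (fun j : (∀ γ, I γ) => cellSupport b j = E),
                Real.exp (∑ F ∈ E.powerset.filter (· ≠ ∅), theta b p F j))) := by
  classical
  have hpb : (0:ℝ) < p b := hp b
  -- LHS as exponential
  have hLHS : ∏ i : (∀ γ, I γ), p i ^ n i
      = Real.exp (∑ i : (∀ γ, I γ), (n i : ℝ) * Real.log (p i)) := by
    rw [Real.exp_sum]
    refine Finset.prod_congr rfl fun i _ => ?_
    rw [← Real.log_pow, Real.exp_log (pow_pos (hp i) _)]
  -- log part
  have hlog : (1 + ∑ E ∈ (Finset.univ : Finset V).powerset.filter (· ≠ ∅),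
      ∑ j ∈ Finset.univ.filter (fun j : (∀ γ, I γ) => cellSupport b j = E),
        Real.exp (∑ F ∈ E.powerset.filter (· ≠ ∅), theta b p F j)) = 1 / p b := by
    have hinner : ∀ E ∈ (Finset.univ : Finset V).powerset.filter (· ≠ ∅),
        ∑ j ∈ Finset.univ.filter (fun j : (∀ γ, I γ) => cellSupport b j = E),
          Real.exp (∑ F ∈ E.powerset.filter (· ≠ ∅), theta b p F j)
        = ∑ j ∈ Finset.univ.filter (fun j : (∀ γ, I γ) => cellSupport b j = E),
            p j / p b := by
      intro E hE
      refine Finset.sum_congr rfl fun j hj => ?_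
      simp only [mem_filter, mem_univ, true_and] at hj
      rw [sum_theta_ne_empty, ← hj, cellOn_support, Real.exp_sub,
        Real.exp_log (hp j), Real.exp_log hpb]
    rw [Finset.sum_congr rfl hinner, double_sum b (fun j => p j / p b)]
    have hsum' : ∑ j ∈ Finset.univ.filter (fun j : (∀ γ, I γ) => j ≠ b), p j
        = 1 - p b := by
      have := Finset.sum_erase_add Finset.univ p (Finset.mem_univ b)
      rw [filter_ne']
      rw [hsum] at this
      linarith
    rw [← Finset.sum_div, hsum']
    field_simp
    ring
  -- main term
  have hmain : (∑ E ∈ (Finset.univ : Finset V).powerset.filter (· ≠ ∅),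
      ∑ j ∈ Finset.univ.filter (fun j : (∀ γ, I γ) => cellSupport b j = E),
        ((∑ g ∈ Finset.univ.filter (fun g : (∀ γ, I γ) => ∀ γ ∈ E, g γ = j γ), n g : ℕ) : ℝ)
          * theta b p E j)
      = ∑ g : (∀ γ, I γ), (n g : ℝ) * (Real.log (p g) - Real.log (p b)) := by
    have step1 : ∀ E ∈ (Finset.univ : Finset V).powerset.filter (· ≠ ∅),
        (∑ j ∈ Finset.univ.filter (fun j : (∀ γ, I γ) => cellSupport b j = E),
          ((∑ g ∈ Finset.univ.filter (fun g : (∀ γ, I γ) => ∀ γ ∈ E, g γ = j γ), n g : ℕ) : ℝ)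
            * theta b p E j)
        = ∑ g : (∀ γ, I γ),
            (if E ⊆ cellSupport b g then (n g : ℝ) * theta b p E g else 0) := by
      intro E hE
      have : ∀ j, ((∑ g ∈ Finset.univ.filter
              (fun g : (∀ γ, I γ) => ∀ γ ∈ E, g γ = j γ), n g : ℕ) : ℝ) * theta b p E j
          = ∑ g ∈ Finset.univ.filter (fun g : (∀ γ, I γ) => ∀ γ ∈ E, g γ = j γ),
              (n g : ℝ) * theta b p E j := by
        intro j
        push_cast
        rw [Finset.sum_mul]
      simp only [this]
      rw [Finset.sum_comm' (t' := (Finset.univ : Finset (∀ γ, I γ)))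
        (s' := fun g => Finset.univ.filter
          (fun j : (∀ γ, I γ) => cellSupport b j = E ∧ ∀ γ ∈ E, g γ = j γ)) (by
          intro j g
          simp only [mem_filter, mem_univ, true_and, and_true])]
      refine Finset.sum_congr rfl fun g _ => ?_
      rw [fiber_eq]
      split_ifs with h
      · rw [Finset.sum_singleton, theta_cellOn b p subset_rfl]
      · simp
    rw [Finset.sum_congr rfl step1, Finset.sum_comm]
    refine Finset.sum_congr rfl fun g _ => ?_
    rw [← Finset.sum_filter]
    have hfe : ((Finset.univ : Finset V).powerset.filter (· ≠ ∅)).filter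
        (fun E => E ⊆ cellSupport b g) = ((cellSupport b g).powerset).filter (· ≠ ∅) := by
      ext E
      simp only [mem_filter, mem_powerset]
      exact ⟨fun h => ⟨h.2, h.1.2⟩, fun h => ⟨⟨subset_univ _, h.2⟩, h.1⟩⟩
    rw [hfe, ← Finset.mul_sum]
    congr 1
    have := sum_theta_ne_empty b p (cellSupport b g) g
    rw [cellOn_support] at this
    exact this
  rw [hmain, hlog, hLHS]
  congr 1
  have hN : ((∑ i : (∀ γ, I γ), n i : ℕ) : ℝ) = ∑ i : (∀ γ, I γ), (n i : ℝ) := by push_cast; rfl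
  rw [hN, Real.log_div one_ne_zero (ne_of_gt hpb), Real.log_one]
  simp only [mul_sub]
  rw [Finset.sum_sub_distrib, ← Finset.sum_mul]
  ring
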